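/- Let G = (V,E) be a chordal claw-free graph, let A be a max clique of G, and suppose the triple (v_1, v_2, v_3) ∈ V^3 spans A. Then for every vertex w ∈ V, we have w ∈ A if and only if w ∈ {v_1, v_2, v_3} or w is adjacent to v_j for all j ∈ {1,2,3}. -/
import Mathlib


open SimpleGraph

/-- A graph is *chordal* if every cycle of length at least 4 has a chord, i.e. an
edge of the graph joining two vertices of the cycle that is not an edge of the cycle. -/
def IsChordal {V : Type*} (G : SimpleGraph V) : Prop :=
  ∀ (v : V) (c : G.Walk v v), c.IsCycle → 4 ≤ c.length →
    ∃ u w : V, u ∈ c.support ∧ w ∈ c.support ∧ G.Adj u w ∧ s(u, w) ∉ c.edges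

/-- A graph is *claw-free* if it has no induced subgraph isomorphic to the
complete bipartite graph `K_{1,3}`. -/
def ClawFree {V : Type*} (G : SimpleGraph V) : Prop :=
  IsEmpty (completeBipartiteGraph (Fin 1) (Fin 3) ↪g G)

/-- A *max clique* of `G` is a maximal clique. -/
def IsMaximalClique {V : Type*} (G : SimpleGraph V) (s : Set V) : Prop :=
  G.IsClique s ∧ ∀ t : Set V, G.IsClique t → s ⊆ t → s = t

/-- The type of max cliques of `G`. -/
abbrev MaxClique {V : Type*} (G : SimpleGraph V) : Type _ :=
  {s : Set V // IsMaximalClique G s}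

/-- `M_v`: the set of max cliques of `G` containing the vertex `v`. -/
def cliquesOf {V : Type*} (G : SimpleGraph V) (v : V) : Set (MaxClique G) :=
  {A | v ∈ A.1}

/-- A *clique tree* of `G`: a tree whose vertices are the max cliques of `G` such
that for every vertex `v` of `G` the subgraph induced by `M_v` is connected. -/
structure IsCliqueTree {V : Type*} (G : SimpleGraph V)
    (T : SimpleGraph (MaxClique G)) : Prop where
  isTree : T.IsTree
  induced_connected : ∀ v : V, (T.induce (cliquesOf G v)).Connected

/-- The subgraph of `T` induced by `S` is a path in `T`: there is a path of `T`
whose vertices are exactly `S` and whose edges are exactly the edges of `T`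
between vertices of `S`. -/
def InducedPath {M : Type*} (T : SimpleGraph M) (S : Set M) : Prop :=
  ∃ (a b : M) (p : T.Walk a b), p.IsPath ∧ (∀ A, A ∈ p.support ↔ A ∈ S) ∧
    ∀ A B, A ∈ S → B ∈ S → (T.Adj A B ↔ s(A, B) ∈ p.edges)

/-- `B` is a *star clique*: every vertex of `B` is contained in at most one
neighbor of `B` in the clique tree `T`. -/
def IsStarClique {V : Type*} (G : SimpleGraph V) (T : SimpleGraph (MaxClique G))
    (B : MaxClique G) : Prop :=
  ∀ v ∈ B.1, ∀ A A' : MaxClique G, T.Adj B A → T.Adj B A' →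
    v ∈ A.1 → v ∈ A'.1 → A = A'

/-- `B` is a *fork clique*: `B` has degree 3 in the clique tree `T`, for every
vertex `v ∈ B` there are two distinct neighbors `A, A'` of `B` with
`M_v = {B, A, A'}`, and for all distinct neighbors `A, A'` of `B` there is a
vertex `v` with `M_v = {B, A, A'}`. -/
def IsForkClique {V : Type*} (G : SimpleGraph V) (T : SimpleGraph (MaxClique G))
    (B : MaxClique G) : Prop :=
  (T.neighborSet B).ncard = 3 ∧
  (∀ v ∈ B.1, ∃ A A' : MaxClique G, A ≠ A' ∧ T.Adj B A ∧ T.Adj B A' ∧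
      cliquesOf G v = {B, A, A'}) ∧
  ∀ A A' : MaxClique G, T.Adj B A → T.Adj B A' → A ≠ A' →
      ∃ v : V, cliquesOf G v = {B, A, A'}

/-- The paths `T[S₁]` and `T[S₂]` *fork in `A`*: there is a fork
`(A', A, {A_P, A_Q})`, i.e. `A', A, A_P` are consecutive vertices of the path
`T[S₁]`, `A', A, A_Q` are consecutive vertices of the path `T[S₂]`,
`A_P` does not occur in `T[S₂]` and `A_Q` does not occur in `T[S₁]`. -/
def ForkAt {M : Type*} (T : SimpleGraph M) (S₁ S₂ : Set M) (A : M) : Prop :=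
  ∃ A' AP AQ : M, A' ∈ S₁ ∧ A' ∈ S₂ ∧ A ∈ S₁ ∧ A ∈ S₂ ∧ AP ∈ S₁ ∧ AQ ∈ S₂ ∧
    T.Adj A' A ∧ T.Adj A AP ∧ T.Adj A AQ ∧ A' ≠ AP ∧ A' ≠ AQ ∧ AP ∉ S₂ ∧ AQ ∉ S₁

/-- `A₁, A₂, A₃` form a *fork triangle* around `B`. -/
def FormsForkTriangle {V : Type*} (G : SimpleGraph V) (T : SimpleGraph (MaxClique G))
    (A₁ A₂ A₃ B : MaxClique G) : Prop :=
  A₁ ≠ A₂ ∧ A₁ ≠ A₃ ∧ A₂ ≠ A₃ ∧ T.Adj B A₁ ∧ T.Adj B A₂ ∧ T.Adj B A₃ ∧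
  (∃ u : V, cliquesOf G u = {A₁, B, A₂}) ∧
  (∃ v : V, cliquesOf G v = {A₂, B, A₃}) ∧
  (∃ w : V, cliquesOf G w = {A₃, B, A₁})

/-- `B` has a fork triangle. -/
def HasForkTriangle {V : Type*} (G : SimpleGraph V) (T : SimpleGraph (MaxClique G))
    (B : MaxClique G) : Prop :=
  ∃ A₁ A₂ A₃ : MaxClique G, FormsForkTriangle G T A₁ A₂ A₃ B

/-- In the tree `T` rooted at `R`, `B` is an ancestor of `A` (equivalently, `A` is
a descendant of `B`): `B` lies on the unique path from `R` to `A`.  Every vertex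
is an ancestor/descendant of itself. -/
def IsAncestor {M : Type*} (T : SimpleGraph M) (R A B : M) : Prop :=
  ∀ p : T.Walk R A, p.IsPath → B ∈ p.support

/-- In the tree `T` rooted at `R`, `A` is a child of `P`. -/
def IsChildOf {M : Type*} (T : SimpleGraph M) (R A P : M) : Prop :=
  T.Adj P A ∧ IsAncestor T R A P

/-- `R` is a leaf of `T`: it has exactly one neighbor. -/
def IsLeaf {M : Type*} (T : SimpleGraph M) (R : M) : Prop :=
  (T.neighborSet R).ncard = 1

/-- The triple `(v₁, v₂, v₃)` *spans* the max clique `A`: `A` is the only max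
clique of `G` containing `v₁`, `v₂` and `v₃`. -/
def Spans {V : Type*} (G : SimpleGraph V) (v₁ v₂ v₃ : V) (A : Set V) : Prop :=
  IsMaximalClique G A ∧ v₁ ∈ A ∧ v₂ ∈ A ∧ v₃ ∈ A ∧
    ∀ B : Set V, IsMaximalClique G B → v₁ ∈ B → v₂ ∈ B → v₃ ∈ B → B = A

/-- Let `G` be a chordal claw-free graph, `A` a max clique of
`G` spanned by the triple `(v₁, v₂, v₃)`.  Then for every vertex `w`, we have
`w ∈ A` iff `w ∈ {v₁, v₂, v₃}` or `w` is adjacent to each of `v₁, v₂, v₃`. -/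
lemma exists_isMaximalClique_superset {V : Type*} (G : SimpleGraph V) (s : Set V)
    (hs : G.IsClique s) : ∃ t : Set V, IsMaximalClique G t ∧ s ⊆ t := by
  obtain ⟨m, hsm, hm⟩ := zorn_subset_nonempty {t : Set V | G.IsClique t ∧ s ⊆ t}
    (fun c hc hchain hne => by
      refine ⟨⋃₀ c, ⟨?_, ?_⟩, fun t ht => Set.subset_sUnion_of_mem ht⟩
      · intro x hx y hy hxy
        obtain ⟨tx, htx, hxtx⟩ := hx
        obtain ⟨ty, hty, hyty⟩ := hy
        rcases hchain.total htx hty with h | h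
        · exact (hc hty).1 (h hxtx) hyty hxy
        · exact (hc htx).1 hxtx (h hyty) hxy
      · obtain ⟨t, ht⟩ := hne
        exact (hc ht).2.trans (Set.subset_sUnion_of_mem ht))
    s ⟨hs, subset_rfl⟩
  refine ⟨m, ⟨hm.prop.1, fun t ht hmt => ?_⟩, hsm⟩
  exact hm.eq_of_le ⟨ht, hm.prop.2.trans hmt⟩ hmt

theorem mem_spanned_maxClique_iff {V : Type*} [Fintype V] [Nonempty V]
    (G : SimpleGraph V) (hch : IsChordal G) (hcf : ClawFree G)
    (A : Set V) (v₁ v₂ v₃ : V) (hspan : Spans G v₁ v₂ v₃ A) (w : V) :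
    w ∈ A ↔ (w = v₁ ∨ w = v₂ ∨ w = v₃) ∨
      (G.Adj w v₁ ∧ G.Adj w v₂ ∧ G.Adj w v₃) := by
  obtain ⟨⟨hAcl, hAmax⟩, h1, h2, h3, huniq⟩ := hspan
  constructor
  · intro hw
    by_cases e1 : w = v₁
    · exact Or.inl (Or.inl e1)
    by_cases e2 : w = v₂
    · exact Or.inl (Or.inr (Or.inl e2))
    by_cases e3 : w = v₃
    · exact Or.inl (Or.inr (Or.inr e3))
    exact Or.inr ⟨hAcl hw h1 e1, hAcl hw h2 e2, hAcl hw h3 e3⟩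
  · rintro (h | ⟨a1, a2, a3⟩)
    · rcases h with rfl | rfl | rfl <;> assumption
    · have hcl : G.IsClique ({w, v₁, v₂, v₃} : Set V) := by
        intro x hx y hy hxy
        have adj : ∀ z ∈ ({w, v₁, v₂, v₃} : Set V), z ≠ w → G.Adj w z := by
          rintro z (rfl | rfl | rfl | rfl) hz
          · exact absurd rfl hz
          · exact a1
          · exact a2
          · exact a3
        rcases hx with rfl | hx
        · exact adj y hy (Ne.symm hxy)
        rcases hy with rfl | hy
        · exact (adj x (Or.inr hx) hxy).symm
        · exact hAcl (by rcases hx with rfl|rfl|rfl <;> assumption)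
            (by rcases hy with rfl|rfl|rfl <;> assumption) hxy
      obtain ⟨t, htmax, hst⟩ := exists_isMaximalClique_superset G _ hcl
      have : t = A := huniq t htmax (hst (by simp)) (hst (by simp)) (hst (by simp))
      exact this ▸ hst (by simp)
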